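/- Let Bⁿ ⊂ ℝⁿ be the open unit ball and define the Berwald metric F(x,y) = (√(‖y‖² − (‖x‖²‖y‖² − ⟨x,y⟩²)) + ⟨x,y⟩)² / ((1 − ‖x‖²)² · √(‖y‖² − (‖x‖²‖y‖² − ⟨x,y⟩²))) for x ∈ Bⁿ, y ∈ ℝⁿ∖{0}. Then F satisfies Rapcsák's equations ∑_k (∂²F/∂x^k∂y^l) y^k = ∂F/∂x^l for every l (F is projective), and its projective factor P = (∑_m (∂F/∂x^m) y^m)/(2F) satisfies ∂P/∂x^k = P·∂P/∂y^k for every k; i.e., F has constant flag curvature K = 0. -/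

import Mathlib

open scoped RealInnerProductSpace BigOperators

noncomputable section

abbrev E (n : ℕ) := EuclideanSpace ℝ (Fin n)

/-- Partial derivative of `F(x,y)` in the direction `∂/∂xⁱ`. -/
def pdx {n : ℕ} (F : E n → E n → ℝ) (i : Fin n) (x y : E n) : ℝ :=
  deriv (fun t : ℝ => F (x + t • EuclideanSpace.single i (1 : ℝ)) y) 0

/-- Partial derivative of `F(x,y)` in the direction `∂/∂yⁱ`. -/
def pdy {n : ℕ} (F : E n → E n → ℝ) (i : Fin n) (x y : E n) : ℝ :=
  deriv (fun t : ℝ => F x (y + t • EuclideanSpace.single i (1 : ℝ))) 0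

/-- The projective factor `P = (∑_m F_{x^m} y^m)/(2F)`. -/
def projFactor {n : ℕ} (F : E n → E n → ℝ) (x y : E n) : ℝ :=
  (∑ m, pdx F m x y * y m) / (2 * F x y)
/-- The Berwald metric on the unit ball. -/
def Berwald {n : ℕ} (x y : E n) : ℝ :=
  (Real.sqrt (‖y‖ ^ 2 - (‖x‖ ^ 2 * ‖y‖ ^ 2 - ⟪x, y⟫ ^ 2)) + ⟪x, y⟫) ^ 2 /
    ((1 - ‖x‖ ^ 2) ^ 2 * Real.sqrt (‖y‖ ^ 2 - (‖x‖ ^ 2 * ‖y‖ ^ 2 - ⟪x, y⟫ ^ 2)))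



namespace BW


def sA (u v w : ℝ) : ℝ := Real.sqrt ((1-u)*v + w^2)
def sf (u v w : ℝ) : ℝ := (sA u v w + w)^2 / ((1-u)^2 * sA u v w)
def sFu (u v w : ℝ) : ℝ := (sA u v w + w)^3 * (3*sA u v w - w) / (2*(1-u)^3 * sA u v w ^3)
def sFv (u v w : ℝ) : ℝ := v / (2 * sA u v w ^3)
def sFw (u v w : ℝ) : ℝ := (sA u v w + w)^2 * (2*sA u v w - w) / ((1-u)^2 * sA u v w ^3)
def sFvu (u v w : ℝ) : ℝ := 3*v^2 / (4 * sA u v w ^5)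
def sFvw (u v w : ℝ) : ℝ := -(3*v*w) / (2 * sA u v w ^5)
def sFwu (u v w : ℝ) : ℝ := (sA u v w + w)^3 * (8*sA u v w^2 - 9*sA u v w*w + 3*w^2) / (2*(1-u)^3 * sA u v w ^5)
def sFww (u v w : ℝ) : ℝ := 3*(sA u v w + w)^2 * (sA u v w - w)^2 / ((1-u)^2 * sA u v w ^5)
def sp (u v w : ℝ) : ℝ := (sA u v w + w) / (1-u)
def spu (u v w : ℝ) : ℝ := (sA u v w + w)^2 / (2 * sA u v w * (1-u)^2)
def spv (u v w : ℝ) : ℝ := 1 / (2 * sA u v w)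
def spw (u v w : ℝ) : ℝ := (sA u v w + w) / (sA u v w * (1-u))

section master
variable {cu cv cw : ℝ → ℝ} {du dv dw : ℝ}

lemma hasDerivAt_sf (hcu : HasDerivAt cu du 0) (hcv : HasDerivAt cv dv 0) (hcw : HasDerivAt cw dw 0)
    (hs : cu 0 < 1) (hD : 0 < (1 - cu 0) * cv 0 + (cw 0)^2) :
    HasDerivAt (fun t => sf (cu t) (cv t) (cw t))
      (sFu (cu 0) (cv 0) (cw 0) * du + sFv (cu 0) (cv 0) (cw 0) * dv
        + sFw (cu 0) (cv 0) (cw 0) * dw) 0 := by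
  set u := cu 0 with hu0
  set v := cv 0 with hv0
  set w := cw 0 with hw0
  have hDne : (1 - u) * v + w^2 ≠ 0 := ne_of_gt hD
  have hsne : (1:ℝ) - u ≠ 0 := ne_of_gt (by linarith)
  have hA0 : 0 < Real.sqrt ((1 - u) * v + w^2) := Real.sqrt_pos.mpr hD
  have hA2 : Real.sqrt ((1 - u) * v + w^2) ^ 2 = (1 - u) * v + w^2 := Real.sq_sqrt hD.le
  have hDd : HasDerivAt (fun t => (1 - cu t) * cv t + (cw t)^2)
      ((-du * v + (1 - u) * dv) + (2 * w ^ 1 * dw)) 0 :=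
    ((hcu.const_sub 1).mul hcv).add (hcw.pow 2)
  have hAd : HasDerivAt (fun t => Real.sqrt ((1 - cu t) * cv t + (cw t)^2))
      ((1 / (2 * Real.sqrt ((1 - u) * v + w^2))) *
        ((-du * v + (1 - u) * dv) + (2 * w ^ 1 * dw))) 0 :=
    (Real.hasDerivAt_sqrt hDne).comp 0 hDd
  have hne : ((1 - u)^2 * Real.sqrt ((1 - u) * v + w^2)) ≠ 0 :=
    mul_ne_zero (pow_ne_zero 2 hsne) (ne_of_gt hA0)
  have hF := (((hAd.add hcw).pow 2).div (((hcu.const_sub 1).pow 2).mul hAd) hne)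
  refine hF.congr_deriv (Eq.symm ?_)
  simp only [Pi.add_apply, Pi.mul_apply, Pi.pow_apply, Pi.div_apply, Pi.sub_apply, ← hu0, ← hv0, ← hw0]
  simp only [sFu, sFv, sFw, sA, pow_one]
  set A := Real.sqrt ((1 - u) * v + w ^ 2) with hAdef
  clear_value A
  clear_value u v w
  have hAne : A ≠ 0 := ne_of_gt hA0
  have hv : v = (A^2 - w^2)/(1-u) := by rw [eq_div_iff hsne]; linarith
  subst hv
  field_simp
  ring
end master

section master2
variable {cu cv cw : ℝ → ℝ} {du dv dw : ℝ} {v : ℝ}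

lemma hasDerivAt_sFv (hcu : HasDerivAt cu du 0) (hcw : HasDerivAt cw dw 0)
    (hs : cu 0 < 1) (hD : 0 < (1 - cu 0) * v + (cw 0)^2) :
    HasDerivAt (fun t => sFv (cu t) v (cw t))
      (sFvu (cu 0) v (cw 0) * du + sFvw (cu 0) v (cw 0) * dw) 0 := by
  set u := cu 0 with hu0
  set w := cw 0 with hw0
  have hDne : (1 - u) * v + w^2 ≠ 0 := ne_of_gt hD
  have hsne : (1:ℝ) - u ≠ 0 := ne_of_gt (by linarith)
  have hA0 : 0 < Real.sqrt ((1 - u) * v + w^2) := Real.sqrt_pos.mpr hD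
  have hA2 : Real.sqrt ((1 - u) * v + w^2) ^ 2 = (1 - u) * v + w^2 := Real.sq_sqrt hD.le
  have hDd : HasDerivAt (fun t => (1 - cu t) * v + (cw t)^2)
      ((-du * v) + (2 * w ^ 1 * dw)) 0 :=
    ((hcu.const_sub 1).mul_const v).add (hcw.pow 2)
  have hAd : HasDerivAt (fun t => Real.sqrt ((1 - cu t) * v + (cw t)^2))
      ((1 / (2 * Real.sqrt ((1 - u) * v + w^2))) * ((-du * v) + (2 * w ^ 1 * dw))) 0 :=
    (Real.hasDerivAt_sqrt hDne).comp 0 hDd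
  have hne : (2 * Real.sqrt ((1 - u) * v + w^2) ^ 3) ≠ 0 := by positivity
  have hF := (hasDerivAt_const (0:ℝ) v).div ((hAd.pow 3).const_mul 2) hne
  refine hF.congr_deriv (Eq.symm ?_)
  simp only [Pi.add_apply, Pi.mul_apply, Pi.pow_apply, Pi.div_apply, Pi.sub_apply, ← hu0, ← hw0]
  simp only [sFvu, sFvw, sA, pow_one]
  set A := Real.sqrt ((1 - u) * v + w ^ 2) with hAdef
  clear_value A
  clear_value u w
  have hAne : A ≠ 0 := ne_of_gt hA0
  have hv : v = (A^2 - w^2)/(1-u) := by rw [eq_div_iff hsne]; linarith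
  subst hv
  field_simp
  ring

lemma hasDerivAt_sFw (hcu : HasDerivAt cu du 0) (hcw : HasDerivAt cw dw 0)
    (hs : cu 0 < 1) (hD : 0 < (1 - cu 0) * v + (cw 0)^2) :
    HasDerivAt (fun t => sFw (cu t) v (cw t))
      (sFwu (cu 0) v (cw 0) * du + sFww (cu 0) v (cw 0) * dw) 0 := by
  set u := cu 0 with hu0
  set w := cw 0 with hw0
  have hDne : (1 - u) * v + w^2 ≠ 0 := ne_of_gt hD
  have hsne : (1:ℝ) - u ≠ 0 := ne_of_gt (by linarith)
  have hA0 : 0 < Real.sqrt ((1 - u) * v + w^2) := Real.sqrt_pos.mpr hD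
  have hA2 : Real.sqrt ((1 - u) * v + w^2) ^ 2 = (1 - u) * v + w^2 := Real.sq_sqrt hD.le
  have hDd : HasDerivAt (fun t => (1 - cu t) * v + (cw t)^2)
      ((-du * v) + (2 * w ^ 1 * dw)) 0 :=
    ((hcu.const_sub 1).mul_const v).add (hcw.pow 2)
  have hAd : HasDerivAt (fun t => Real.sqrt ((1 - cu t) * v + (cw t)^2))
      ((1 / (2 * Real.sqrt ((1 - u) * v + w^2))) * ((-du * v) + (2 * w ^ 1 * dw))) 0 :=
    (Real.hasDerivAt_sqrt hDne).comp 0 hDd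
  have hne : ((1 - u)^2 * Real.sqrt ((1 - u) * v + w^2) ^ 3) ≠ 0 :=
    mul_ne_zero (pow_ne_zero 2 hsne) (by positivity)
  have hF := (((hAd.add hcw).pow 2).mul ((hAd.const_mul 2).sub hcw)).div
    (((hcu.const_sub 1).pow 2).mul (hAd.pow 3)) hne
  refine hF.congr_deriv (Eq.symm ?_)
  simp only [Pi.add_apply, Pi.mul_apply, Pi.pow_apply, Pi.div_apply, Pi.sub_apply, ← hu0, ← hw0]
  simp only [sFwu, sFww, sA, pow_one]
  set A := Real.sqrt ((1 - u) * v + w ^ 2) with hAdef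
  clear_value A
  clear_value u w
  have hAne : A ≠ 0 := ne_of_gt hA0
  have hv : v = (A^2 - w^2)/(1-u) := by rw [eq_div_iff hsne]; linarith
  subst hv
  field_simp
  ring
end master2

section master3
variable {cu cv cw : ℝ → ℝ} {du dv dw : ℝ}

lemma hasDerivAt_sp (hcu : HasDerivAt cu du 0) (hcv : HasDerivAt cv dv 0) (hcw : HasDerivAt cw dw 0)
    (hs : cu 0 < 1) (hD : 0 < (1 - cu 0) * cv 0 + (cw 0)^2) :
    HasDerivAt (fun t => sp (cu t) (cv t) (cw t))
      (spu (cu 0) (cv 0) (cw 0) * du + spv (cu 0) (cv 0) (cw 0) * dv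
        + spw (cu 0) (cv 0) (cw 0) * dw) 0 := by
  set u := cu 0 with hu0
  set v := cv 0 with hv0
  set w := cw 0 with hw0
  have hDne : (1 - u) * v + w^2 ≠ 0 := ne_of_gt hD
  have hsne : (1:ℝ) - u ≠ 0 := ne_of_gt (by linarith)
  have hA0 : 0 < Real.sqrt ((1 - u) * v + w^2) := Real.sqrt_pos.mpr hD
  have hA2 : Real.sqrt ((1 - u) * v + w^2) ^ 2 = (1 - u) * v + w^2 := Real.sq_sqrt hD.le
  have hDd : HasDerivAt (fun t => (1 - cu t) * cv t + (cw t)^2)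
      ((-du * v + (1 - u) * dv) + (2 * w ^ 1 * dw)) 0 :=
    ((hcu.const_sub 1).mul hcv).add (hcw.pow 2)
  have hAd : HasDerivAt (fun t => Real.sqrt ((1 - cu t) * cv t + (cw t)^2))
      ((1 / (2 * Real.sqrt ((1 - u) * v + w^2))) *
        ((-du * v + (1 - u) * dv) + (2 * w ^ 1 * dw))) 0 :=
    (Real.hasDerivAt_sqrt hDne).comp 0 hDd
  have hF := (hAd.add hcw).div (hcu.const_sub 1) hsne
  refine hF.congr_deriv (Eq.symm ?_)
  simp only [Pi.add_apply, Pi.mul_apply, Pi.pow_apply, Pi.div_apply, Pi.sub_apply, ← hu0, ← hv0, ← hw0]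
  simp only [spu, spv, spw, sA, pow_one]
  set A := Real.sqrt ((1 - u) * v + w ^ 2) with hAdef
  clear_value A
  clear_value u v w
  have hAne : A ≠ 0 := ne_of_gt hA0
  have hv : v = (A^2 - w^2)/(1-u) := by rw [eq_div_iff hsne]; linarith
  subst hv
  field_simp
  ring
end master3

section idents
variable {u v w : ℝ}

lemma aux_facts (hs : u < 1) (hD : 0 < (1-u)*v + w^2) :
    (0 < sA u v w ∧ sA u v w ^ 2 = (1-u)*v + w^2) :=
  ⟨Real.sqrt_pos.mpr hD, Real.sq_sqrt hD.le⟩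

lemma id_rap1 (hs : u < 1) (hD : 0 < (1-u)*v + w^2) :
    2*w*sFvu u v w + v*sFvw u v w = 0 := by
  obtain ⟨hA0, hA2⟩ := aux_facts hs hD
  have hsne : (1:ℝ) - u ≠ 0 := ne_of_gt (by linarith)
  simp only [sFvu, sFvw, sA] at *
  set A := Real.sqrt ((1 - u) * v + w ^ 2) with hAdef
  field_simp
  linear_combination ( 0 ) * hA2

lemma id_rap2 (hs : u < 1) (hD : 0 < (1-u)*v + w^2) :
    2*w*sFwu u v w + v*sFww u v w = 2*sFu u v w := by
  obtain ⟨hA0, hA2⟩ := aux_facts hs hD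
  have hsne : (1:ℝ) - u ≠ 0 := ne_of_gt (by linarith)
  simp only [sFwu, sFww, sFu, sA] at *
  set A := Real.sqrt ((1 - u) * v + w ^ 2) with hAdef
  clear_value A
  have hAne : A ≠ 0 := ne_of_gt hA0
  have hv : v = (A^2 - w^2)/(1-u) := by rw [eq_div_iff hsne]; linarith
  subst hv
  field_simp
  ring

lemma id_proj (hs : u < 1) (hD : 0 < (1-u)*v + w^2) :
    2*w*sFu u v w + v*sFw u v w = 2 * sf u v w * sp u v w := by
  obtain ⟨hA0, hA2⟩ := aux_facts hs hD
  have hsne : (1:ℝ) - u ≠ 0 := ne_of_gt (by linarith)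
  simp only [sFu, sFw, sf, sp, sA] at *
  set A := Real.sqrt ((1 - u) * v + w ^ 2) with hAdef
  clear_value A
  have hAne : A ≠ 0 := ne_of_gt hA0
  have hv : v = (A^2 - w^2)/(1-u) := by rw [eq_div_iff hsne]; linarith
  subst hv
  field_simp
  ring

lemma id_curv1 (hs : u < 1) (hD : 0 < (1-u)*v + w^2) :
    2 * spu u v w = sp u v w * spw u v w := by
  obtain ⟨hA0, hA2⟩ := aux_facts hs hD
  have hsne : (1:ℝ) - u ≠ 0 := ne_of_gt (by linarith)
  simp only [spu, sp, spw, sA] at *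
  set A := Real.sqrt ((1 - u) * v + w ^ 2) with hAdef
  field_simp

lemma id_curv2 (hs : u < 1) (hD : 0 < (1-u)*v + w^2) :
    spw u v w = 2 * sp u v w * spv u v w := by
  obtain ⟨hA0, hA2⟩ := aux_facts hs hD
  have hsne : (1:ℝ) - u ≠ 0 := ne_of_gt (by linarith)
  simp only [spw, sp, spv, sA] at *
  set A := Real.sqrt ((1 - u) * v + w ^ 2) with hAdef
  field_simp

lemma sf_ne (hs : u < 1) (hv : 0 < v) : sf u v w ≠ 0 := by
  have hD : 0 < (1-u)*v + w^2 := by nlinarith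
  obtain ⟨hA0, hA2⟩ := aux_facts hs hD
  have hAw : 0 < sA u v w + w := by nlinarith [abs_nonneg w, sq_abs w, neg_abs_le w]
  have hsne : (1:ℝ) - u ≠ 0 := ne_of_gt (by linarith)
  simp only [sf]
  positivity
end idents


section geom
open EuclideanSpace
variable {n : ℕ}

local notation "ES" i => EuclideanSpace.single i (1:ℝ)

lemma curve_norm_sq (x : E n) (i : Fin n) (t : ℝ) :
    ‖x + t • (ES i)‖^2 = ‖x‖^2 + 2*(x i)*t + t^2 := by
  have h1 : ⟪x, t • (ES i)⟫ = t * x i := by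
    rw [real_inner_smul_right, EuclideanSpace.inner_single_right]; simp
  have h2 : ‖t • (ES i)‖^2 = t^2 := by
    rw [norm_smul]; simp [EuclideanSpace.norm_single, sq_abs]
  rw [norm_add_sq_real, h1, h2]; ring

lemma curve_inner_left (x y : E n) (i : Fin n) (t : ℝ) :
    ⟪x + t • (ES i), y⟫ = ⟪x,y⟫ + y i * t := by
  rw [inner_add_left, real_inner_smul_left, EuclideanSpace.inner_single_left]
  simp; ring

lemma curve_inner_right (x y : E n) (i : Fin n) (t : ℝ) :
    ⟪x, y + t • (ES i)⟫ = ⟪x,y⟫ + x i * t := by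
  rw [inner_add_right, real_inner_smul_right, EuclideanSpace.inner_single_right]
  simp; ring

lemma hasDerivAt_quad (a b : ℝ) : HasDerivAt (fun t:ℝ => a + b*t + t^2) b 0 := by
  have h := (((hasDerivAt_id (0:ℝ)).const_mul b).const_add a).add
    ((hasDerivAt_id (0:ℝ)).pow 2)
  exact h.congr_deriv (by simp)

lemma hasDerivAt_lin (a b : ℝ) : HasDerivAt (fun t:ℝ => a + b*t) b 0 := by
  simpa using ((hasDerivAt_id (0:ℝ)).const_mul b).const_add a

lemma hcu_norm (x : E n) (i : Fin n) : HasDerivAt (fun t : ℝ => ‖x + t • (ES i)‖^2) (2*(x i)) 0 := by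
  simp only [curve_norm_sq]; exact hasDerivAt_quad _ _

lemma hcw_inner (x y : E n) (i : Fin n) :
    HasDerivAt (fun t : ℝ => ⟪x + t • (ES i), y⟫) (y i) 0 := by
  simp only [curve_inner_left]; exact hasDerivAt_lin _ _

lemma hcw_inner' (x y : E n) (i : Fin n) :
    HasDerivAt (fun t : ℝ => ⟪x, y + t • (ES i)⟫) (x i) 0 := by
  simp only [curve_inner_right]; exact hasDerivAt_lin _ _

lemma hcv_norm (y : E n) (i : Fin n) : HasDerivAt (fun t : ℝ => ‖y + t • (ES i)‖^2) (2*(y i)) 0 := by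
  simp only [curve_norm_sq]; exact hasDerivAt_quad _ _

lemma cu_zero (x : E n) (i : Fin n) : ‖x + (0:ℝ) • (ES i)‖^2 = ‖x‖^2 := by simp
lemma cw_zero (x y : E n) (i : Fin n) : ⟪x + (0:ℝ) • (ES i), y⟫ = ⟪x,y⟫ := by simp
lemma cw_zero' (x y : E n) (i : Fin n) : ⟪x, y + (0:ℝ) • (ES i)⟫ = ⟪x,y⟫ := by simp

lemma Berwald_eq (x y : E n) : Berwald x y = sf (‖x‖^2) (‖y‖^2) ⟪x,y⟫ := by
  simp only [Berwald, sf, sA]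
  rw [show ‖y‖^2 - (‖x‖^2*‖y‖^2 - ⟪x,y⟫^2) = (1-‖x‖^2)*‖y‖^2 + ⟪x,y⟫^2 from by ring]

lemma cond_u {x : E n} (hx : ‖x‖ < 1) : ‖x‖^2 < 1 := by nlinarith [norm_nonneg x]
lemma cond_v {y : E n} (hy : y ≠ 0) : 0 < ‖y‖^2 := by
  have := norm_pos_iff.mpr hy; positivity
lemma cond_D {x y : E n} (hx : ‖x‖ < 1) (hy : y ≠ 0) :
    0 < (1 - ‖x‖^2) * ‖y‖^2 + ⟪x,y⟫^2 :=
  add_pos_of_pos_of_nonneg (mul_pos (by have := cond_u hx; linarith) (cond_v hy)) (sq_nonneg _)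

lemma pdx_Berwald {x : E n} (hx : ‖x‖ < 1) {y : E n} (hy : y ≠ 0) (i : Fin n) :
    pdx Berwald i x y
      = sFu (‖x‖^2) (‖y‖^2) ⟪x,y⟫ * (2*(x i)) + sFw (‖x‖^2) (‖y‖^2) ⟪x,y⟫ * (y i) := by
  have heq : (fun t : ℝ => Berwald (x + t • (ES i)) y)
      = fun t => sf (‖x + t • (ES i)‖^2) (‖y‖^2) ⟪x + t • (ES i), y⟫ :=
    funext fun t => Berwald_eq _ _
  have H := hasDerivAt_sf (hcu_norm x i) (hasDerivAt_const (0:ℝ) (‖y‖^2)) (hcw_inner x y i)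
    (by rw [cu_zero]; exact cond_u hx)
    (by rw [cu_zero, cw_zero]; exact cond_D hx hy)
  rw [pdx, heq, H.deriv, cu_zero, cw_zero]
  ring

lemma pdy_Berwald {x : E n} (hx : ‖x‖ < 1) {y : E n} (hy : y ≠ 0) (i : Fin n) :
    pdy Berwald i x y
      = sFv (‖x‖^2) (‖y‖^2) ⟪x,y⟫ * (2*(y i)) + sFw (‖x‖^2) (‖y‖^2) ⟪x,y⟫ * (x i) := by
  have heq : (fun t : ℝ => Berwald x (y + t • (ES i)))
      = fun t => sf (‖x‖^2) (‖y + t • (ES i)‖^2) ⟪x, y + t • (ES i)⟫ :=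
    funext fun t => Berwald_eq _ _
  have H := hasDerivAt_sf (hasDerivAt_const (0:ℝ) (‖x‖^2)) (hcv_norm y i) (hcw_inner' x y i)
    (cond_u hx)
    (by rw [cu_zero, cw_zero']; exact cond_D hx hy)
  rw [pdy, heq, H.deriv, cu_zero, cw_zero']
  ring

lemma eventually_ball {x : E n} (hx : ‖x‖ < 1) (k : Fin n) :
    ∀ᶠ t in nhds (0:ℝ), ‖x + t • (ES k)‖ < 1 := by
  have hc : Continuous fun t : ℝ => ‖x + t • (ES k)‖ :=
    (continuous_const.add (continuous_id.smul continuous_const)).norm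
  have h := hc.continuousAt (x := (0:ℝ))
  have := h.eventually_lt continuousAt_const (by simpa using hx)
  exact this

lemma eventually_ne {y : E n} (hy : y ≠ 0) (k : Fin n) :
    ∀ᶠ t in nhds (0:ℝ), y + t • (ES k) ≠ 0 := by
  have hc : Continuous fun t : ℝ => y + t • (ES k) :=
    continuous_const.add (continuous_id.smul continuous_const)
  exact hc.continuousAt (x := (0:ℝ)).eventually_ne (by simpa using hy)

lemma pdx_pdy_Berwald {x : E n} (hx : ‖x‖ < 1) {y : E n} (hy : y ≠ 0) (k l : Fin n) :
    pdx (fun a b => pdy Berwald l a b) k x y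
      = (sFvu (‖x‖^2) (‖y‖^2) ⟪x,y⟫ * (2*(x k)) + sFvw (‖x‖^2) (‖y‖^2) ⟪x,y⟫ * (y k)) * (2*(y l))
        + (sFwu (‖x‖^2) (‖y‖^2) ⟪x,y⟫ * (2*(x k)) + sFww (‖x‖^2) (‖y‖^2) ⟪x,y⟫ * (y k)) * (x l)
        + sFw (‖x‖^2) (‖y‖^2) ⟪x,y⟫ * ((ES k) l) := by
  have heq : (fun t : ℝ => pdy Berwald l (x + t • (ES k)) y)
      =ᶠ[nhds (0:ℝ)] fun t =>
        sFv (‖x + t • (ES k)‖^2) (‖y‖^2) ⟪x + t • (ES k), y⟫ * (2*(y l))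
          + sFw (‖x + t • (ES k)‖^2) (‖y‖^2) ⟪x + t • (ES k), y⟫ * ((x + t • (ES k)) l) :=
    (eventually_ball hx k).mono fun t ht => pdy_Berwald ht hy l
  rw [pdx, heq.deriv_eq]
  have hl : (fun t : ℝ => (x + t • (ES k)) l) = fun t => x l + ((ES k) l) * t := by
    funext t
    simp [PiLp.add_apply, PiLp.smul_apply, smul_eq_mul, mul_comm]
  have Hv := hasDerivAt_sFv (v := ‖y‖^2) (hcu_norm x k) (hcw_inner x y k)
    (by rw [cu_zero]; exact cond_u hx)
    (by rw [cu_zero, cw_zero]; exact cond_D hx hy)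
  have Hw := hasDerivAt_sFw (v := ‖y‖^2) (hcu_norm x k) (hcw_inner x y k)
    (by rw [cu_zero]; exact cond_u hx)
    (by rw [cu_zero, cw_zero]; exact cond_D hx hy)
  have Hlin : HasDerivAt (fun t : ℝ => (x + t • (ES k)) l) ((ES k) l) 0 := by
    rw [hl]; exact hasDerivAt_lin _ _
  have H : HasDerivAt (fun t : ℝ => sFv (‖x + t • (ES k)‖^2) (‖y‖^2) ⟪x + t • (ES k), y⟫ * (2*(y l))
            + sFw (‖x + t • (ES k)‖^2) (‖y‖^2) ⟪x + t • (ES k), y⟫ * ((x + t • (ES k)) l)) _ 0 :=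
    (Hv.mul_const (2*(y l))).add (Hw.mul Hlin)
  rw [H.deriv, cu_zero, cw_zero]
  have h0 : (x + (0:ℝ) • (ES k)) l = x l := by simp
  rw [h0]
  ring

lemma sum_inner (x y : E n) : ∑ k, x k * y k = ⟪x,y⟫ := by
  rw [PiLp.inner_apply]; simp [RCLike.inner_apply, mul_comm]

lemma sum_self (y : E n) : ∑ k, y k * y k = ‖y‖^2 := by
  rw [← real_inner_self_eq_norm_sq]; exact sum_inner y y

lemma sum_single (y : E n) (l : Fin n) : ∑ k, ((ES k) l) * y k = y l := by
  simp [EuclideanSpace.single_apply]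

lemma projFactor_eq {x : E n} (hx : ‖x‖ < 1) {y : E n} (hy : y ≠ 0) :
    projFactor Berwald x y = sp (‖x‖^2) (‖y‖^2) ⟪x,y⟫ := by
  have hsum : ∑ m, pdx Berwald m x y * y m
      = sFu (‖x‖^2) (‖y‖^2) ⟪x,y⟫ * (2*⟪x,y⟫) + sFw (‖x‖^2) (‖y‖^2) ⟪x,y⟫ * ‖y‖^2 := by
    rw [Finset.sum_congr rfl (fun m _ => by rw [pdx_Berwald hx hy m])]
    rw [Finset.sum_congr rfl (fun m _ => show _ =
        (sFu (‖x‖^2) (‖y‖^2) ⟪x,y⟫ * 2) * (x m * y m)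
          + sFw (‖x‖^2) (‖y‖^2) ⟪x,y⟫ * (y m * y m) from by ring)]
    rw [Finset.sum_add_distrib, ← Finset.mul_sum, ← Finset.mul_sum, sum_inner, sum_self]
    ring
  rw [projFactor, hsum, Berwald_eq]
  rw [div_eq_iff (by
    have := sf_ne (cond_u hx) (cond_v hy) (w := ⟪x,y⟫)
    positivity)]
  have := id_proj (cond_u hx) (cond_D hx hy) (w := ⟪x,y⟫)
  linear_combination this

end geom

end BW
open BW

/-- The Berwald metric is projective and has constant flag curvature `K = 0`. -/
theorem berwald_projective_constant_curvature {n : ℕ} :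
    (∀ x : E n, ‖x‖ < 1 → ∀ y : E n, y ≠ 0 → ∀ l : Fin n,
        (∑ k, pdx (fun a b => pdy Berwald l a b) k x y * y k) = pdx Berwald l x y) ∧
      (∀ x : E n, ‖x‖ < 1 → ∀ y : E n, y ≠ 0 → ∀ k : Fin n,
        pdx (projFactor Berwald) k x y =
          projFactor Berwald x y * pdy (projFactor Berwald) k x y) := by
  constructor
  · intro x hx y hy l
    have hu := cond_u hx
    have hD := cond_D hx hy
    rw [Finset.sum_congr rfl (fun k _ => by rw [pdx_pdy_Berwald hx hy k l])]
    rw [Finset.sum_congr rfl (fun k _ => show _ =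
        (4 * sFvu (‖x‖^2) (‖y‖^2) ⟪x,y⟫ * y l + 2 * sFwu (‖x‖^2) (‖y‖^2) ⟪x,y⟫ * x l) * (x k * y k)
        + (2 * sFvw (‖x‖^2) (‖y‖^2) ⟪x,y⟫ * y l + sFww (‖x‖^2) (‖y‖^2) ⟪x,y⟫ * x l) * (y k * y k)
        + sFw (‖x‖^2) (‖y‖^2) ⟪x,y⟫ * ((EuclideanSpace.single k (1:ℝ)) l * y k) from by ring)]
    rw [Finset.sum_add_distrib, Finset.sum_add_distrib, ← Finset.mul_sum, ← Finset.mul_sum,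
      ← Finset.mul_sum, sum_inner, sum_self, sum_single]
    rw [pdx_Berwald hx hy l]
    linear_combination (2 * y l) * id_rap1 hu hD + (x l) * id_rap2 hu hD
  · intro x hx y hy k
    have hu := cond_u hx
    have hD := cond_D hx hy
    have heq1 : (fun t : ℝ => projFactor Berwald (x + t • EuclideanSpace.single k (1:ℝ)) y)
        =ᶠ[nhds (0:ℝ)] fun t => sp (‖x + t • EuclideanSpace.single k (1:ℝ)‖^2) (‖y‖^2)
          ⟪x + t • EuclideanSpace.single k (1:ℝ), y⟫ :=
      (eventually_ball hx k).mono fun t ht => projFactor_eq ht hy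
    have H1 := hasDerivAt_sp (hcu_norm x k) (hasDerivAt_const (0:ℝ) (‖y‖^2)) (hcw_inner x y k)
      (by rw [cu_zero]; exact hu)
      (by rw [cu_zero, cw_zero]; exact hD)
    have heq2 : (fun t : ℝ => projFactor Berwald x (y + t • EuclideanSpace.single k (1:ℝ)))
        =ᶠ[nhds (0:ℝ)] fun t => sp (‖x‖^2) (‖y + t • EuclideanSpace.single k (1:ℝ)‖^2)
          ⟪x, y + t • EuclideanSpace.single k (1:ℝ)⟫ :=
      (eventually_ne hy k).mono fun t ht => projFactor_eq hx ht
    have H2 := hasDerivAt_sp (hasDerivAt_const (0:ℝ) (‖x‖^2)) (hcv_norm y k) (hcw_inner' x y k)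
      hu (by rw [cu_zero, cw_zero']; exact hD)
    rw [pdx, pdy, heq1.deriv_eq, heq2.deriv_eq, H1.deriv, H2.deriv, cu_zero, cu_zero, cw_zero,
      cw_zero', projFactor_eq hx hy]
    linear_combination (x k) * id_curv1 hu hD + (y k) * id_curv2 hu hD
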